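/- Let a2, b1, b2, b12, c2, d2, q2 be positive reals, y10, y20 positive reals, ρ a nonzero real number, and τ1 ≥ 0. Define the 5×5 complex matrices A12 = [[−a2,0,0,0,0],[b1,−(b2+b12*y20),0,−b12*y10,0],[0,0,−c2,0,0],[0,0,0,−d2,1],[0,0,q2,0,−q2]] and B12 the matrix whose only nonzero entry is ρ in row 3, column 2, and set p2 = b2+c2+d2+b12*y20, p1 = (c2+d2)*(b2+b12*y20)+c2*d2, p0 = c2*d2*(b2+b12*y20), r = ρ*b12*y10. Suppose ω10 > 0 and λ1 = iω10 satisfies (λ1 + q2)*(λ1³ + p2*λ1² + p1*λ1 + p0) + r*q2*e^{−λ1*τ1} = 0. Then the vector v = (0, (λ1+q2)*(λ1+c2)*e^{λ1*τ1}/ρ, λ1+q2, q2/(λ1+d2), q2) is nonzero and satisfies (A12 + e^{−λ1*τ1}*B12)·v = λ1·v. -/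

import Mathlib

open Matrix

/-- Eigenvector of the linearized five-dimensional P53-Mdm2 system
(weak kernel case) at a purely imaginary characteristic root. -/
theorem stmt_19 (a2 b1 b2 b12 c2 d2 q2 : ℝ)
    (ha2 : 0 < a2) (hb1 : 0 < b1) (hb2 : 0 < b2) (hb12 : 0 < b12)
    (hc2 : 0 < c2) (hd2 : 0 < d2) (hq2 : 0 < q2)
    (y10 y20 : ℝ) (hy10 : 0 < y10) (hy20 : 0 < y20)
    (ρ : ℝ) (hρ : ρ ≠ 0) (τ1 : ℝ) (hτ1 : 0 ≤ τ1)
    (A12 B12 : Matrix (Fin 5) (Fin 5) ℂ)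
    (hA12 : A12 = !![(-a2 : ℂ), 0, 0, 0, 0;
                 (b1 : ℂ), -((b2 : ℂ) + b12 * y20), 0, -(b12 : ℂ) * y10, 0;
                 0, 0, (-c2 : ℂ), 0, 0;
                 0, 0, 0, (-d2 : ℂ), 1;
                 0, 0, (q2 : ℂ), 0, (-q2 : ℂ)])
    (hB12 : B12 = !![(0 : ℂ), 0, 0, 0, 0;
                   0, 0, 0, 0, 0;
                   0, (ρ : ℂ), 0, 0, 0;
                   0, 0, 0, 0, 0;
                   0, 0, 0, 0, 0])
    (p2 p1 p0 r : ℝ)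
    (hp2 : p2 = b2 + c2 + d2 + b12 * y20)
    (hp1 : p1 = (c2 + d2) * (b2 + b12 * y20) + c2 * d2)
    (hp0 : p0 = c2 * d2 * (b2 + b12 * y20))
    (hr : r = ρ * b12 * y10)
    (ω10 : ℝ) (hω10 : 0 < ω10)
    (lam1 : ℂ) (hlam1 : lam1 = Complex.I * ω10)
    (hroot : (lam1 + q2) * (lam1 ^ 3 + p2 * lam1 ^ 2 + p1 * lam1 + p0) +
        r * q2 * Complex.exp (-lam1 * τ1) = 0)
    (v : Fin 5 → ℂ)
    (hv : v = ![0,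
        (lam1 + q2) * (lam1 + c2) * Complex.exp (lam1 * τ1) / ρ,
        lam1 + q2,
        q2 / (lam1 + d2),
        (q2 : ℂ)]) :
    v ≠ 0 ∧
      (A12 + Complex.exp (-lam1 * τ1) • B12).mulVec v = lam1 • v := by
  have hρ' : (ρ : ℂ) ≠ 0 := Complex.ofReal_ne_zero.mpr hρ
  have hq2' : (q2 : ℂ) ≠ 0 := Complex.ofReal_ne_zero.mpr hq2.ne'
  have hd : lam1 + (d2 : ℂ) ≠ 0 := by
    intro h
    have := congrArg Complex.re h
    simp [hlam1, Complex.add_re, Complex.mul_re] at this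
    linarith
  have hEE : Complex.exp (-lam1 * τ1) * Complex.exp (lam1 * τ1) = 1 := by
    rw [← Complex.exp_add]; ring_nf; exact Complex.exp_zero
  constructor
  · intro h
    have h4 := congrFun h 4
    simp [hv] at h4
    exact hq2' (by exact_mod_cast h4)
  · subst hv hp2 hp1 hp0 hr
    push_cast at hroot
    simp only [neg_mul] at hroot hEE
    have hM : A12 + Complex.exp (-lam1 * τ1) • B12 =
        !![(-a2 : ℂ), 0, 0, 0, 0;
           (b1 : ℂ), -((b2 : ℂ) + b12 * y20), 0, -(b12 : ℂ) * y10, 0;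
           0, Complex.exp (-lam1 * τ1) * ρ, (-c2 : ℂ), 0, 0;
           0, 0, 0, (-d2 : ℂ), 1;
           0, 0, (q2 : ℂ), 0, (-q2 : ℂ)] := by
      subst hA12 hB12
      ext i j
      fin_cases i <;> fin_cases j <;>
        simp [Matrix.add_apply, Matrix.smul_apply, Matrix.cons_val', Matrix.cons_val_zero,
          Matrix.cons_val_one, Matrix.head_cons, Matrix.empty_val', Matrix.cons_val_fin_one,
          Matrix.vecHead, Matrix.vecTail]
    rw [hM]
    funext i
    fin_cases i <;>
      simp [Matrix.mulVec, dotProduct, Fin.sum_univ_five,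
        Matrix.cons_val', Matrix.cons_val_zero, Matrix.cons_val_one,
        Matrix.head_cons, Matrix.empty_val', Matrix.cons_val_fin_one,
        Matrix.head_fin_const] <;>
      push_cast
    · field_simp
      linear_combination (-Complex.exp (lam1 * τ1)) * hroot +
        ((ρ:ℂ) * b12 * y10 * q2) * hEE
    · field_simp
      linear_combination ((lam1 + q2) * (lam1 + c2)) * hEE
    · field_simp
      try ring
    · try field_simp
      try ring
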